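/- arXiv:1110.5848 — 8 statements merged into one kernel-verified Lean document; each statement's English description precedes it below -/
import Mathlib

section
/- A (not necessarily associative) K-algebra (A, μ), where μ : A ⊗[K] A → A is the linear map encoding multiplication, is zero product determined if and only if the kernel of μ is generated as a K-submodule by the pure tensors it contains, i.e., ker μ = span{ a₁ ⊗ a₂ : a₁a₂ = 0 }. -/
open TensorProduct

universe u v w

theorem zpd_characterization {K : Type u} [CommRing K]
    {A : Type v} [AddCommGroup A] [Module K A]
    (μ : TensorProduct K A A →ₗ[K] A) :
    (∀ (B : Type (max u v w)) [AddCommGroup B] [Module K B]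
        (φ : TensorProduct K A A →ₗ[K] B),
      (∀ a₁ a₂ : A, μ (a₁ ⊗ₜ a₂) = 0 → φ (a₁ ⊗ₜ a₂) = 0) →
      ∃ ψ : LinearMap.range μ →ₗ[K] B,
        ∀ x, φ x = ψ ⟨μ x, LinearMap.mem_range_self μ x⟩) ↔
    LinearMap.ker μ =
      Submodule.span K {t | ∃ a₁ a₂ : A, t = a₁ ⊗ₜ[K] a₂ ∧ μ (a₁ ⊗ₜ[K] a₂) = 0} := by
  constructor
  · intro h
    set S : Set (TensorProduct K A A) :=
      {t | ∃ a₁ a₂ : A, t = a₁ ⊗ₜ[K] a₂ ∧ μ (a₁ ⊗ₜ[K] a₂) = 0} with hS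
    set N := Submodule.span K S with hN
    have hle : N ≤ LinearMap.ker μ := by
      rw [hN, Submodule.span_le]
      rintro t ⟨a₁, a₂, rfl, h0⟩
      exact h0
    refine le_antisymm ?_ hle
    let φ : TensorProduct K A A →ₗ[K] ULift.{max u v w} ((TensorProduct K A A) ⧸ N) :=
      (ULift.moduleEquiv.symm.toLinearMap).comp N.mkQ
    obtain ⟨ψ, hψ⟩ := h _ φ (by
      intro a₁ a₂ h0
      have hmem : (a₁ ⊗ₜ[K] a₂) ∈ N := Submodule.subset_span ⟨a₁, a₂, rfl, h0⟩
      simp only [φ, LinearMap.comp_apply, Submodule.mkQ_apply]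
      rw [(Submodule.Quotient.mk_eq_zero N).mpr hmem, map_zero])
    intro x hx
    have hμ : μ x = 0 := hx
    have hφ0 : φ x = 0 := by
      rw [hψ x]
      have h1 : (⟨μ x, LinearMap.mem_range_self μ x⟩ : LinearMap.range μ) = 0 := by
        ext; simp [hμ]
      rw [h1, map_zero]
    have hmk : N.mkQ x = 0 := by
      have := congrArg (ULift.moduleEquiv (R := K)) hφ0
      simpa [φ] using this
    exact (Submodule.Quotient.mk_eq_zero N).mp hmk
  · intro hker B _ _ φ hφ
    have hle : LinearMap.ker μ ≤ LinearMap.ker φ := by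
      rw [hker, Submodule.span_le]
      rintro t ⟨a₁, a₂, rfl, h0⟩
      exact hφ a₁ a₂ h0
    refine ⟨((LinearMap.ker μ).liftQ φ hle).comp (μ.quotKerEquivRange.symm.toLinearMap),
      fun x => ?_⟩
    have hsym : μ.quotKerEquivRange.symm ⟨μ x, LinearMap.mem_range_self μ x⟩ =
        Submodule.Quotient.mk x := by
      apply μ.quotKerEquivRange.injective
      rw [LinearEquiv.apply_symm_apply]; ext; rw [LinearMap.quotKerEquivRange_apply_mk]
    simp [LinearMap.comp_apply, hsym, Submodule.liftQ_apply]
end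

section
/- Let K be a field and V a K-vector space with dim V ≥ 2. Then the tensor algebra T(V), viewed as a K-algebra, is not zero product determined: the set of pure tensors in the kernel of its multiplication map μ : T(V) ⊗ T(V) → T(V) is {0}, yet ker μ ≠ 0. -/
open TensorProduct

/-- The set of pure tensors killed by the multiplication map. -/
def zeroTensors {K A : Type*} [CommRing K] [AddCommGroup A] [Module K A]
    (μ : TensorProduct K A A →ₗ[K] A) : Set (TensorProduct K A A) :=
  {t | ∃ a b : A, t = a ⊗ₜ[K] b ∧ μ (a ⊗ₜ[K] b) = 0}

/-- An algebra `(A, μ)` is zero product determined iff the kernel of `μ` is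
spanned by the pure tensors it contains. -/
def IsZPD {K A : Type*} [CommRing K] [AddCommGroup A] [Module K A]
    (μ : TensorProduct K A A →ₗ[K] A) : Prop :=
  LinearMap.ker μ = Submodule.span K (zeroTensors μ)

theorem tensor_algebra_not_zpd {K V : Type*} [Field K] [AddCommGroup V] [Module K V]
    (h : 2 ≤ Module.rank K V)
    (μ : TensorProduct K (TensorAlgebra K V) (TensorAlgebra K V) →ₗ[K] TensorAlgebra K V)
    (hμ : ∀ a b : TensorAlgebra K V, μ (a ⊗ₜ b) = a * b) :
    zeroTensors μ = {0} ∧ LinearMap.ker μ ≠ ⊥ ∧ ¬ IsZPD μ := by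
  have h1 : zeroTensors μ = {0} := by
    ext t
    constructor
    · rintro ⟨a, b, rfl, hab⟩
      rw [hμ] at hab
      rcases mul_eq_zero.mp hab with rfl | rfl
      · simp [zero_tmul]
      · simp [tmul_zero]
    · rintro rfl
      exact ⟨0, 0, by simp [zero_tmul], by simp⟩
  -- find a nonzero vector
  have hpos : 0 < Module.rank K V := lt_of_lt_of_le (by norm_num) h
  obtain ⟨x, hx⟩ : ∃ x : V, x ≠ 0 := by
    rw [rank_pos_iff_exists_ne_zero] at hpos
    exact hpos
  obtain ⟨φ, hφ⟩ : ∃ φ : Module.Dual K V, φ x ≠ 0 := by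
    by_contra hc
    push_neg at hc
    exact hx ((Module.forall_dual_apply_eq_zero_iff K x).mp hc)
  set f : TensorAlgebra K V →ₗ[K] K := φ ∘ₗ TensorAlgebra.ιInv with hf
  have hfι : ∀ v : V, f (TensorAlgebra.ι K v) = φ v := fun v => by
    simp [hf, TensorAlgebra.ι_leftInverse v]
  have hf1 : f (1 : TensorAlgebra K V) = 0 := by
    have : TensorAlgebra.ιInv (1 : TensorAlgebra K V) = 0 := by
      unfold TensorAlgebra.ιInv
      simp
      letI : Module Kᵐᵒᵖ V := Module.compHom _ ((RingHom.id K).fromOpposite mul_comm)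
      haveI : IsCentralScalar K V := ⟨fun r m => rfl⟩
      exact (congrArg TrivSqZeroExt.snd (map_one TensorAlgebra.toTrivSqZeroExt)).trans TrivSqZeroExt.snd_one
    simp [hf, this]
  set F : TensorProduct K (TensorAlgebra K V) (TensorAlgebra K V) →ₗ[K] K :=
    (TensorProduct.lid K K).toLinearMap ∘ₗ TensorProduct.map f f with hF
  have hFt : ∀ a b : TensorAlgebra K V, F (a ⊗ₜ b) = f a * f b := fun a b => by
    simp [hF, smul_eq_mul]
  set t : TensorProduct K (TensorAlgebra K V) (TensorAlgebra K V) :=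
    (TensorAlgebra.ι K x) ⊗ₜ (TensorAlgebra.ι K x)
      - (1 : TensorAlgebra K V) ⊗ₜ (TensorAlgebra.ι K x * TensorAlgebra.ι K x) with ht
  have htker : t ∈ LinearMap.ker μ := by
    rw [LinearMap.mem_ker, ht, map_sub, hμ, hμ, one_mul, sub_self]
  have htne : t ≠ 0 := by
    intro h0
    have : F t = 0 := by rw [h0, map_zero]
    rw [ht, map_sub, hFt, hFt, hf1, zero_mul, sub_zero, hfι] at this
    exact mul_self_ne_zero.mpr hφ this
  have h2 : LinearMap.ker μ ≠ ⊥ := by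
    intro hbot
    rw [hbot, Submodule.mem_bot] at htker
    exact htne htker
  refine ⟨h1, h2, ?_⟩
  intro hz
  rw [IsZPD, h1] at hz
  simp only [Submodule.span_singleton_eq_bot.mpr rfl] at hz
  exact h2 hz
end

section
/- Let (A_i, μ_i), i ∈ I, be K-algebras and (A, μ) their direct sum algebra. Then the submodule of A ⊗ A spanned by the pure tensors killed by μ equals (⊕_{i∈I} ⟨T_{μ_i}⟩) ⊕ (⊕_{i≠j} A_i ⊗ A_j), where ⟨T_{μ_i}⟩ is the span in A_i ⊗ A_i of the pure tensors killed by μ_i. -/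
open TensorProduct DirectSum

variable {K : Type*} [CommRing K] {I : Type*} [DecidableEq I]
  {A : I → Type*} [∀ i, AddCommGroup (A i)] [∀ i, Module K (A i)]

lemma component_mu
    (μi : ∀ i, TensorProduct K (A i) (A i) →ₗ[K] A i)
    (μ : TensorProduct K (⨁ i, A i) (⨁ i, A i) →ₗ[K] ⨁ i, A i)
    (hdiag : ∀ (i : I) (a b : A i),
      μ (DirectSum.lof K I A i a ⊗ₜ DirectSum.lof K I A i b) =
        DirectSum.lof K I A i (μi i (a ⊗ₜ b)))
    (hoff : ∀ i j : I, i ≠ j → ∀ (a : A i) (b : A j),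
      μ (DirectSum.lof K I A i a ⊗ₜ DirectSum.lof K I A j b) = 0)
    (k : I) (x y : ⨁ i, A i) :
    DirectSum.component K I A k (μ (x ⊗ₜ y)) = μi k (x k ⊗ₜ y k) := by
  have key : (LinearMap.compr₂ (TensorProduct.mk K (⨁ i, A i) (⨁ i, A i))
      ((DirectSum.component K I A k) ∘ₗ μ)) =
      (LinearMap.compr₂ (TensorProduct.mk K (A k) (A k)) (μi k)).compl₁₂
        (DirectSum.component K I A k) (DirectSum.component K I A k) := by
    refine DirectSum.linearMap_ext _ fun i => LinearMap.ext fun a => ?_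
    refine DirectSum.linearMap_ext _ fun j => LinearMap.ext fun b => ?_
    simp only [LinearMap.coe_comp, Function.comp_apply, LinearMap.compr₂_apply,
      LinearMap.compl₁₂_apply, TensorProduct.mk_apply]
    by_cases hij : i = j
    · subst hij
      rw [hdiag]
      by_cases hik : i = k
      · subst hik; simp
      · simp [DirectSum.component.of, hik]
    · rw [hoff i j hij]
      rcases eq_or_ne i k with rfl | hik
      · simp [DirectSum.component.of, (Ne.symm hij : ¬ j = i)]
      · simp [DirectSum.component.of, hik]
  have := LinearMap.congr_fun (LinearMap.congr_fun key x) y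
  simp at this
  exact this


theorem direct_sum_pure_tensors
    (μi : ∀ i, TensorProduct K (A i) (A i) →ₗ[K] A i)
    (μ : TensorProduct K (⨁ i, A i) (⨁ i, A i) →ₗ[K] ⨁ i, A i)
    (hdiag : ∀ (i : I) (a b : A i),
      μ (DirectSum.lof K I A i a ⊗ₜ DirectSum.lof K I A i b) =
        DirectSum.lof K I A i (μi i (a ⊗ₜ b)))
    (hoff : ∀ i j : I, i ≠ j → ∀ (a : A i) (b : A j),
      μ (DirectSum.lof K I A i a ⊗ₜ DirectSum.lof K I A j b) = 0) :
    Submodule.span K (zeroTensors μ) =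
      (⨆ i : I, Submodule.map
          (TensorProduct.map (DirectSum.lof K I A i) (DirectSum.lof K I A i))
          (Submodule.span K (zeroTensors (μi i)))) ⊔
      (⨆ (p : I × I) (_ : p.1 ≠ p.2), LinearMap.range
          (TensorProduct.map (DirectSum.lof K I A p.1) (DirectSum.lof K I A p.2))) := by
  apply le_antisymm
  · -- span ⊆ RHS
    rw [Submodule.span_le]
    rintro t ⟨x, y, rfl, h0⟩
    classical
    have hx : (∑ i ∈ DFinsupp.support x, DirectSum.lof K I A i (x i)) = x := by
      simpa [DirectSum.lof_eq_of] using DirectSum.sum_support_of x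
    have hy : (∑ j ∈ DFinsupp.support y, DirectSum.lof K I A j (y j)) = y := by
      simpa [DirectSum.lof_eq_of] using DirectSum.sum_support_of y
    rw [← hx, ← hy, TensorProduct.sum_tmul]
    refine Submodule.sum_mem _ fun i _ => ?_
    rw [TensorProduct.tmul_sum]
    refine Submodule.sum_mem _ fun j _ => ?_
    rcases eq_or_ne i j with rfl | hij
    · -- diagonal
      have hz : μi i (x i ⊗ₜ[K] y i) = 0 := by
        have := component_mu μi μ hdiag hoff i x y
        rw [h0] at this
        simpa using this.symm
      refine Submodule.mem_sup_left ?_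
      refine Submodule.mem_iSup_of_mem i ?_
      exact ⟨x i ⊗ₜ[K] y i, Submodule.subset_span ⟨x i, y i, rfl, hz⟩, by simp⟩
    · refine Submodule.mem_sup_right ?_
      refine Submodule.mem_iSup_of_mem (i, j) ?_
      refine Submodule.mem_iSup_of_mem hij ?_
      exact ⟨x i ⊗ₜ[K] y j, by simp⟩
  · refine sup_le (iSup_le fun i => ?_) (iSup_le fun p => iSup_le fun hp => ?_)
    · rw [Submodule.map_span, Submodule.span_le]
      rintro t ⟨s, ⟨a, b, rfl, hab⟩, rfl⟩
      refine Submodule.subset_span ⟨DirectSum.lof K I A i a, DirectSum.lof K I A i b, by simp, ?_⟩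
      rw [hdiag, hab, map_zero]
    · rw [TensorProduct.range_map_eq_span_tmul, Submodule.span_le]
      rintro t ⟨a, b, rfl⟩
      exact Submodule.subset_span ⟨_, _, rfl, hoff p.1 p.2 hp a b⟩
end

section
/- Let (A_i, μ_i), i ∈ I, be K-algebras for an arbitrary index set I, and let (A, μ) be their direct sum algebra. Then (A, μ) is zero product determined if and only if (A_i, μ_i) is zero product determined for every i ∈ I. -/
open TensorProduct DirectSum

variable {K : Type*} [CommRing K] {I : Type*} [DecidableEq I]
  {A : I → Type*} [∀ i, AddCommGroup (A i)] [∀ i, Module K (A i)]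

/-- spans of zero tensors always lie in the kernel. -/
lemma zpd_span_le_ker {A' : Type*} [AddCommGroup A'] [Module K A']
    (ν : TensorProduct K A' A' →ₗ[K] A') :
    Submodule.span K (zeroTensors ν) ≤ LinearMap.ker ν := by
  rw [Submodule.span_le]
  rintro t ⟨a, b, rfl, h⟩
  exact LinearMap.mem_ker.mpr h

section Aux

variable (μi : ∀ i, TensorProduct K (A i) (A i) →ₗ[K] A i)
    (μ : TensorProduct K (⨁ i, A i) (⨁ i, A i) →ₗ[K] ⨁ i, A i)
    (hdiag : ∀ (i : I) (a b : A i),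
      μ (DirectSum.lof K I A i a ⊗ₜ DirectSum.lof K I A i b) =
        DirectSum.lof K I A i (μi i (a ⊗ₜ b)))
    (hoff : ∀ i j : I, i ≠ j → ∀ (a : A i) (b : A j),
      μ (DirectSum.lof K I A i a ⊗ₜ DirectSum.lof K I A j b) = 0)

include hdiag hoff in
lemma zpd_comp_mu (i : I) :
    (DirectSum.component K I A i) ∘ₗ μ
      = (μi i) ∘ₗ TensorProduct.map (DirectSum.component K I A i) (DirectSum.component K I A i) := by
  ext j x k y
  simp only [AlgebraTensorModule.curry_apply, TensorProduct.curry_apply,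
    LinearMap.coe_restrictScalars, LinearMap.coe_comp, Function.comp_apply,
    TensorProduct.map_tmul]
  by_cases hjk : j = k
  · subst hjk
    rw [hdiag]
    by_cases hij : j = i
    · subst hij
      simp [DirectSum.component.lof_self]
    · rw [DirectSum.component.of, dif_neg hij, DirectSum.component.of, dif_neg hij,
        DirectSum.component.of, dif_neg hij]
      simp
  · rw [hoff j k hjk]
    have : DirectSum.component K I A i (DirectSum.lof K I A j x) = 0 ∨
        DirectSum.component K I A i (DirectSum.lof K I A k y) = 0 := by
      rcases ne_or_eq j i with h | h
      · left; rw [DirectSum.component.of, dif_neg h]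
      · right; subst h
        rw [DirectSum.component.of, dif_neg (fun h => hjk h.symm)]
    rcases this with h | h <;> rw [h] <;> simp

include hdiag in
lemma zpd_mu_incl (i : I) :
    μ ∘ₗ TensorProduct.map (DirectSum.lof K I A i) (DirectSum.lof K I A i)
      = (DirectSum.lof K I A i) ∘ₗ μi i := by
  ext x y
  simp [hdiag]

lemma zpd_proj_incl (i : I) :
    TensorProduct.map (DirectSum.component K I A i) (DirectSum.component K I A i) ∘ₗ
      TensorProduct.map (DirectSum.lof K I A i) (DirectSum.lof K I A i)
      = LinearMap.id := by
  ext x y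
  simp [DirectSum.component.lof_self]

lemma zpd_e_comp (p : I × I) :
    (DirectSum.component K (I × I) (fun p : I × I => TensorProduct K (A p.1) (A p.2)) p) ∘ₗ
      (TensorProduct.directSum K K A A).toLinearMap
      = TensorProduct.map (DirectSum.component K I A p.1) (DirectSum.component K I A p.2) := by
  obtain ⟨p₁, p₂⟩ := p
  ext j x k y
  simp only [AlgebraTensorModule.curry_apply, TensorProduct.curry_apply,
    LinearMap.coe_restrictScalars, LinearMap.coe_comp, Function.comp_apply,
    LinearEquiv.coe_coe, TensorProduct.map_tmul, TensorProduct.directSum_lof_tmul_lof]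
  by_cases h1 : j = p₁
  · subst h1
    by_cases h2 : k = p₂
    · subst h2
      simp [DirectSum.component.lof_self]
    · rw [DirectSum.component.of, dif_neg (fun h => h2 (congrArg Prod.snd h)),
        DirectSum.component.of (R := K) p₂ k y, dif_neg h2, tmul_zero]
  · rw [DirectSum.component.of, dif_neg (fun h => h1 (congrArg Prod.fst h)),
      DirectSum.component.of (R := K) p₁ j x, dif_neg h1, zero_tmul]

include hoff in
lemma zpd_offdiag (j k : I) (hjk : j ≠ k) (s : TensorProduct K (A j) (A k)) :
    TensorProduct.map (DirectSum.lof K I A j) (DirectSum.lof K I A k) s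
      ∈ Submodule.span K (zeroTensors μ) := by
  induction s using TensorProduct.induction_on with
  | zero => simp
  | tmul x y =>
    rw [TensorProduct.map_tmul]
    exact Submodule.subset_span ⟨_, _, rfl, hoff j k hjk x y⟩
  | add u v hu hv =>
    rw [map_add]
    exact Submodule.add_mem _ hu hv

include hdiag in
lemma zpd_diag_image (i : I) :
    (TensorProduct.map (DirectSum.lof K I A i) (DirectSum.lof K I A i)) '' zeroTensors (μi i)
      ⊆ zeroTensors μ := by
  rintro _ ⟨_, ⟨a, b, rfl, h0⟩, rfl⟩
  rw [TensorProduct.map_tmul]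
  exact ⟨_, _, rfl, by rw [hdiag, h0, map_zero]⟩

lemma zpd_e_symm (p : I × I) (u : TensorProduct K (A p.1) (A p.2)) :
    (TensorProduct.directSum K K A A).symm
        (DirectSum.lof K (I × I) (fun q : I × I => TensorProduct K (A q.1) (A q.2)) p u)
      = TensorProduct.map (DirectSum.lof K I A p.1) (DirectSum.lof K I A p.2) u := by
  obtain ⟨p₁, p₂⟩ := p
  induction u using TensorProduct.induction_on with
  | zero => simp
  | tmul x y =>
    rw [TensorProduct.map_tmul]
    simp
  | add u v hu hv =>
    rw [map_add, map_add, map_add, hu, hv]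

end Aux

theorem direct_sum_zpd_iff
    (μi : ∀ i, TensorProduct K (A i) (A i) →ₗ[K] A i)
    (μ : TensorProduct K (⨁ i, A i) (⨁ i, A i) →ₗ[K] ⨁ i, A i)
    (hdiag : ∀ (i : I) (a b : A i),
      μ (DirectSum.lof K I A i a ⊗ₜ DirectSum.lof K I A i b) =
        DirectSum.lof K I A i (μi i (a ⊗ₜ b)))
    (hoff : ∀ i j : I, i ≠ j → ∀ (a : A i) (b : A j),
      μ (DirectSum.lof K I A i a ⊗ₜ DirectSum.lof K I A j b) = 0) :
    IsZPD μ ↔ ∀ i : I, IsZPD (μi i) := by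
  classical
  constructor
  · intro hzpd i
    refine le_antisymm ?_ (zpd_span_le_ker (μi i))
    intro t ht
    have h1 : TensorProduct.map (DirectSum.lof K I A i) (DirectSum.lof K I A i) t
        ∈ LinearMap.ker μ := by
      rw [LinearMap.mem_ker, ← LinearMap.comp_apply, zpd_mu_incl μi μ hdiag i,
        LinearMap.comp_apply, LinearMap.mem_ker.mp ht, map_zero]
    rw [hzpd] at h1
    have h2 := Submodule.mem_map_of_mem
      (f := TensorProduct.map (DirectSum.component K I A i) (DirectSum.component K I A i)) h1
    rw [Submodule.map_span] at h2
    rw [← LinearMap.comp_apply, zpd_proj_incl, LinearMap.id_apply] at h2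
    refine Submodule.span_le.mpr ?_ h2
    rintro _ ⟨_, ⟨a, b, rfl, h0⟩, rfl⟩
    refine Submodule.subset_span ⟨DirectSum.component K I A i a,
      DirectSum.component K I A i b, by rw [TensorProduct.map_tmul], ?_⟩
    have hcm := LinearMap.congr_fun (zpd_comp_mu μi μ hdiag hoff i) (a ⊗ₜ[K] b)
    rw [LinearMap.comp_apply, LinearMap.comp_apply, h0, map_zero,
      TensorProduct.map_tmul] at hcm
    exact hcm.symm
  · intro hall
    refine le_antisymm ?_ (zpd_span_le_ker μ)
    intro t ht
    set e := TensorProduct.directSum K K A A with he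
    have hdecomp : t = ∑ p ∈ DFinsupp.support (e t),
        e.symm (DirectSum.lof K (I × I) (fun q : I × I => TensorProduct K (A q.1) (A q.2)) p
          (e t p)) := by
      conv_lhs => rw [← e.symm_apply_apply t,
        ← DirectSum.sum_support_of (x := e t), map_sum]
      simp [DirectSum.lof_eq_of]
    rw [hdecomp]
    refine Submodule.sum_mem _ fun p _ => ?_
    rw [zpd_e_symm]
    by_cases hp : p.1 = p.2
    · obtain ⟨p₁, p₂⟩ := p
      simp only at hp
      subst hp
      have hcomp : (e t) (p₁, p₁)
          = TensorProduct.map (DirectSum.component K I A p₁) (DirectSum.component K I A p₁) t := by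
        have := LinearMap.congr_fun (zpd_e_comp (A := A) (p₁, p₁)) t
        exact this
      have hker : (e t) (p₁, p₁) ∈ LinearMap.ker (μi p₁) := by
        rw [LinearMap.mem_ker, hcomp]
        have hcm := LinearMap.congr_fun (zpd_comp_mu μi μ hdiag hoff p₁) t
        rw [LinearMap.comp_apply, LinearMap.comp_apply, LinearMap.mem_ker.mp ht, map_zero] at hcm
        exact hcm.symm
      rw [hall p₁] at hker
      have h2 := Submodule.mem_map_of_mem
        (f := TensorProduct.map (DirectSum.lof K I A p₁) (DirectSum.lof K I A p₁)) hker
      rw [Submodule.map_span] at h2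
      exact Submodule.span_mono (zpd_diag_image μi μ hdiag p₁) h2
    · exact zpd_offdiag μ hoff p.1 p.2 hp (e t p)
end

section
/- Let A be a zero product determined K-algebra with identity 1_A, let B be a K-algebra, and let f : A → B be a K-linear map such that f(a₁)f(a₂) = 0 whenever a₁a₂ = 0. Then f(a₁)f(a₂) = f(1_A) f(a₁a₂) for all a₁, a₂ ∈ A. -/
universe u v w

theorem zpd_zero_product_preserver {K : Type u} [CommRing K]
    {A : Type v} [NonAssocRing A] [Module K A] [SMulCommClass K A A] [IsScalarTower K A A]
    {B : Type w} [NonUnitalNonAssocRing B] [Module K B] [SMulCommClass K B B]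
    [IsScalarTower K B B]
    (hzpd : ∀ (M : Type w) [AddCommGroup M] [Module K M] (φ : A →ₗ[K] A →ₗ[K] M),
      (∀ a₁ a₂ : A, a₁ * a₂ = 0 → φ a₁ a₂ = 0) →
      ∃ ψ : ↥(Submodule.span K {x : A | ∃ a₁ a₂ : A, x = a₁ * a₂}) →ₗ[K] M,
        ∀ a₁ a₂ : A, φ a₁ a₂ = ψ ⟨a₁ * a₂, Submodule.subset_span ⟨a₁, a₂, rfl⟩⟩)
    (f : A →ₗ[K] B)
    (hf : ∀ a₁ a₂ : A, a₁ * a₂ = 0 → f a₁ * f a₂ = 0) :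
    ∀ a₁ a₂ : A, f a₁ * f a₂ = f 1 * f (a₁ * a₂) := by
  set φ : A →ₗ[K] A →ₗ[K] B := ((LinearMap.mul K B).comp f).compl₂ f with hφ
  have hφ0 : ∀ a₁ a₂ : A, a₁ * a₂ = 0 → φ a₁ a₂ = 0 := fun a₁ a₂ h => hf a₁ a₂ h
  obtain ⟨ψ, hψ⟩ := hzpd B φ hφ0
  intro a₁ a₂
  have h1 := hψ a₁ a₂
  have h2 := hψ 1 (a₁ * a₂)
  simp only [one_mul] at h2
  have : φ a₁ a₂ = φ 1 (a₁ * a₂) := h1.trans h2.symm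
  simpa [hφ] using this
end

section
/- Let A be a zero product determined unital K-algebra, B a unital K-algebra, and f : A → B a zero product preserving K-linear map with f(1_A) = 1_B. Then f is a K-algebra homomorphism, i.e., f(a₁a₂) = f(a₁)f(a₂) for all a₁, a₂ ∈ A. -/
universe u v w

theorem zpd_unital_zero_product_preserver_is_hom {K : Type u} [CommRing K]
    {A : Type v} [NonAssocRing A] [Module K A] [SMulCommClass K A A] [IsScalarTower K A A]
    {B : Type w} [NonAssocRing B] [Module K B] [SMulCommClass K B B] [IsScalarTower K B B]
    (hzpd : ∀ (M : Type w) [AddCommGroup M] [Module K M] (φ : A →ₗ[K] A →ₗ[K] M),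
      (∀ a₁ a₂ : A, a₁ * a₂ = 0 → φ a₁ a₂ = 0) →
      ∃ ψ : ↥(Submodule.span K {x : A | ∃ a₁ a₂ : A, x = a₁ * a₂}) →ₗ[K] M,
        ∀ a₁ a₂ : A, φ a₁ a₂ = ψ ⟨a₁ * a₂, Submodule.subset_span ⟨a₁, a₂, rfl⟩⟩)
    (f : A →ₗ[K] B)
    (hf : ∀ a₁ a₂ : A, a₁ * a₂ = 0 → f a₁ * f a₂ = 0)
    (hone : f 1 = 1) :
    ∀ a₁ a₂ : A, f (a₁ * a₂) = f a₁ * f a₂ := by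
  classical
  have hmem : ∀ a : A, a ∈ Submodule.span K {x : A | ∃ a₁ a₂ : A, x = a₁ * a₂} :=
    fun a => Submodule.subset_span ⟨a, 1, (mul_one a).symm⟩
  let φ : A →ₗ[K] A →ₗ[K] B := LinearMap.mk₂ K (fun a b => f a * f b)
    (fun a a' b => by show f (a + a') * f b = f a * f b + f a' * f b; rw [map_add, add_mul])
    (fun c a b => by show f (c • a) * f b = c • (f a * f b); rw [map_smul, smul_mul_assoc])
    (fun a b b' => by show f a * f (b + b') = f a * f b + f a * f b'; rw [map_add, mul_add])
    (fun c a b => by show f a * f (c • b) = c • (f a * f b); rw [map_smul, mul_smul_comm])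
  obtain ⟨ψ, hψ⟩ := hzpd B φ (fun a₁ a₂ h => hf a₁ a₂ h)
  have hψ' : ∀ a₁ a₂ : A, f a₁ * f a₂ = ψ ⟨a₁ * a₂, Submodule.subset_span ⟨a₁, a₂, rfl⟩⟩ :=
    hψ
  have key : ∀ a : A, f a = ψ ⟨a, hmem a⟩ := by
    intro a
    have h := hψ' a 1
    rw [hone, mul_one] at h
    rw [h]
    congr 1
    exact Subtype.ext (mul_one a)
  intro a₁ a₂
  rw [key (a₁ * a₂)]
  rw [hψ' a₁ a₂]
end

section
/- The direct sum A ⊕ B of two zero product determined K-algebras (A, μ) and (B, λ), with multiplication (a₁,b₁)(a₂,b₂) = (a₁a₂, b₁b₂), is zero product determined; conversely, if A ⊕ B is zero product determined then so are both A and B. -/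
open TensorProduct

theorem binary_direct_sum_zpd {K A B : Type*} [CommRing K]
    [AddCommGroup A] [Module K A] [AddCommGroup B] [Module K B]
    (μ : TensorProduct K A A →ₗ[K] A) (lam : TensorProduct K B B →ₗ[K] B)
    (ν : TensorProduct K (A × B) (A × B) →ₗ[K] A × B)
    (hν : ∀ (a₁ a₂ : A) (b₁ b₂ : B),
      ν ((a₁, b₁) ⊗ₜ (a₂, b₂)) = (μ (a₁ ⊗ₜ a₂), lam (b₁ ⊗ₜ b₂))) :
    IsZPD ν ↔ IsZPD μ ∧ IsZPD lam := by
  set pA := TensorProduct.map (LinearMap.fst K A B) (LinearMap.fst K A B) with hpA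
  set pB := TensorProduct.map (LinearMap.snd K A B) (LinearMap.snd K A B) with hpB
  set jA := TensorProduct.map (LinearMap.inl K A B) (LinearMap.inl K A B) with hjA
  set jB := TensorProduct.map (LinearMap.inr K A B) (LinearMap.inr K A B) with hjB
  have hν0 : ∀ x y : A × B, ν (x ⊗ₜ y) = (μ (x.1 ⊗ₜ y.1), lam (x.2 ⊗ₜ y.2)) := by
    intro x y; simpa using hν x.1 y.1 x.2 y.2
  have hfst : ∀ t, (ν t).1 = μ (pA t) := by
    intro t
    induction t using TensorProduct.induction_on with
    | zero => simp
    | tmul x y => simp [hν0, hpA]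
    | add x y hx hy => simp [hx, hy]
  have hsnd : ∀ t, (ν t).2 = lam (pB t) := by
    intro t
    induction t using TensorProduct.induction_on with
    | zero => simp
    | tmul x y => simp [hν0, hpB]
    | add x y hx hy => simp [hx, hy]
  have hjAν : ∀ s, ν (jA s) = (μ s, 0) := by
    intro s
    induction s using TensorProduct.induction_on with
    | zero => simp; rfl
    | tmul a b => simp [hjA, hν0]
    | add x y hx hy => simp [hx, hy, Prod.add_def]
  have hjBν : ∀ s, ν (jB s) = (0, lam s) := by
    intro s
    induction s using TensorProduct.induction_on with
    | zero => simp; rfl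
    | tmul a b => simp [hjB, hν0]
    | add x y hx hy => simp [hx, hy, Prod.add_def]
  have hpjA : ∀ s, pA (jA s) = s := by
    intro s
    induction s using TensorProduct.induction_on with
    | zero => simp
    | tmul a b => simp [hjA, hpA]
    | add x y hx hy => simp [hx, hy]
  have hpjB : ∀ s, pB (jB s) = s := by
    intro s
    induction s using TensorProduct.induction_on with
    | zero => simp
    | tmul a b => simp [hjB, hpB]
    | add x y hx hy => simp [hx, hy]
  have hmix1 : ∀ (a : A) (b : B), ((a, (0 : B)) ⊗ₜ[K] ((0 : A), b)) ∈ zeroTensors ν :=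
    fun a b => ⟨_, _, rfl, by simp [hν0]⟩
  have hmix2 : ∀ (a : A) (b : B), (((0 : A), b) ⊗ₜ[K] (a, (0 : B))) ∈ zeroTensors ν :=
    fun a b => ⟨_, _, rfl, by simp [hν0]⟩
  have hdecomp : ∀ t, t - jA (pA t) - jB (pB t) ∈ Submodule.span K (zeroTensors ν) := by
    intro t
    induction t using TensorProduct.induction_on with
    | zero => simp
    | tmul x y =>
      have hx : x = (x.1, (0 : B)) + ((0 : A), x.2) := by simp [Prod.add_def]
      have hy : y = (y.1, (0 : B)) + ((0 : A), y.2) := by simp [Prod.add_def]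
      have hexp : x ⊗ₜ[K] y
          = (x.1, (0 : B)) ⊗ₜ (y.1, (0 : B)) + (x.1, (0 : B)) ⊗ₜ ((0 : A), y.2)
            + ((0 : A), x.2) ⊗ₜ (y.1, (0 : B)) + ((0 : A), x.2) ⊗ₜ ((0 : A), y.2) := by
        conv_lhs => rw [hx, hy]
        rw [tmul_add, add_tmul, add_tmul]
        abel
      have key : x ⊗ₜ[K] y - jA (pA (x ⊗ₜ y)) - jB (pB (x ⊗ₜ y))
          = (x.1, (0 : B)) ⊗ₜ ((0 : A), y.2) + ((0 : A), x.2) ⊗ₜ (y.1, (0 : B)) := by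
        have h1 : jA (pA (x ⊗ₜ[K] y)) = (x.1, (0 : B)) ⊗ₜ (y.1, (0 : B)) := by
          simp [hpA, hjA]
        have h2 : jB (pB (x ⊗ₜ[K] y)) = ((0 : A), x.2) ⊗ₜ ((0 : A), y.2) := by
          simp [hpB, hjB]
        rw [h1, h2, hexp]; abel
      rw [key]
      exact Submodule.add_mem _ (Submodule.subset_span (hmix1 _ _))
        (Submodule.subset_span (hmix2 _ _))
    | add x y hx hy =>
      have : (x + y) - jA (pA (x + y)) - jB (pB (x + y))
          = (x - jA (pA x) - jB (pB x)) + (y - jA (pA y) - jB (pB y)) := by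
        rw [map_add, map_add, map_add, map_add]; abel
      rw [this]
      exact Submodule.add_mem _ hx hy
  have himgA : ∀ s ∈ zeroTensors μ, jA s ∈ zeroTensors ν := by
    rintro s ⟨a, b, rfl, h0⟩
    exact ⟨(a, 0), (b, 0), by simp [hjA], by simp [hν0, h0]⟩
  have himgB : ∀ s ∈ zeroTensors lam, jB s ∈ zeroTensors ν := by
    rintro s ⟨a, b, rfl, h0⟩
    exact ⟨(0, a), (0, b), by simp [hjB], by simp [hν0, h0]⟩
  have hprojA : ∀ s ∈ zeroTensors ν, pA s ∈ zeroTensors μ := by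
    rintro s ⟨x, y, rfl, h0⟩
    refine ⟨x.1, y.1, by simp [hpA], ?_⟩
    have := congrArg Prod.fst h0
    simpa [hν0] using this
  have hprojB : ∀ s ∈ zeroTensors ν, pB s ∈ zeroTensors lam := by
    rintro s ⟨x, y, rfl, h0⟩
    refine ⟨x.2, y.2, by simp [hpB], ?_⟩
    have := congrArg Prod.snd h0
    simpa [hν0] using this
  constructor
  · intro h
    rw [IsZPD] at h
    constructor
    · rw [IsZPD]
      refine le_antisymm ?_ ?_
      · intro t ht
        rw [LinearMap.mem_ker] at ht
        have hk : jA t ∈ LinearMap.ker ν := by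
          rw [LinearMap.mem_ker, hjAν, ht]; rfl
        rw [h] at hk
        have ht2 : pA (jA t) ∈ Submodule.map pA (Submodule.span K (zeroTensors ν)) :=
          ⟨_, hk, rfl⟩
        rw [hpjA, Submodule.map_span] at ht2
        refine Submodule.span_le.mpr ?_ ht2
        rintro _ ⟨s, hs, rfl⟩
        exact Submodule.subset_span (hprojA s hs)
      · rw [Submodule.span_le]
        rintro _ ⟨a, b, rfl, h0⟩
        exact h0
    · rw [IsZPD]
      refine le_antisymm ?_ ?_
      · intro t ht
        rw [LinearMap.mem_ker] at ht
        have hk : jB t ∈ LinearMap.ker ν := by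
          rw [LinearMap.mem_ker, hjBν, ht]; rfl
        rw [h] at hk
        have ht2 : pB (jB t) ∈ Submodule.map pB (Submodule.span K (zeroTensors ν)) :=
          ⟨_, hk, rfl⟩
        rw [hpjB, Submodule.map_span] at ht2
        refine Submodule.span_le.mpr ?_ ht2
        rintro _ ⟨s, hs, rfl⟩
        exact Submodule.subset_span (hprojB s hs)
      · rw [Submodule.span_le]
        rintro _ ⟨a, b, rfl, h0⟩
        exact h0
  · rintro ⟨h1, h2⟩
    rw [IsZPD] at h1 h2 ⊢
    refine le_antisymm ?_ ?_
    · intro t ht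
      rw [LinearMap.mem_ker] at ht
      have hA : pA t ∈ LinearMap.ker μ := by
        rw [LinearMap.mem_ker, ← hfst, ht]; rfl
      have hB : pB t ∈ LinearMap.ker lam := by
        rw [LinearMap.mem_ker, ← hsnd, ht]; rfl
      rw [h1] at hA
      rw [h2] at hB
      have hA' : jA (pA t) ∈ Submodule.span K (zeroTensors ν) := by
        have : jA (pA t) ∈ Submodule.map jA (Submodule.span K (zeroTensors μ)) := ⟨_, hA, rfl⟩
        rw [Submodule.map_span] at this
        refine Submodule.span_le.mpr ?_ this
        rintro _ ⟨s, hs, rfl⟩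
        exact Submodule.subset_span (himgA s hs)
      have hB' : jB (pB t) ∈ Submodule.span K (zeroTensors ν) := by
        have : jB (pB t) ∈ Submodule.map jB (Submodule.span K (zeroTensors lam)) := ⟨_, hB, rfl⟩
        rw [Submodule.map_span] at this
        refine Submodule.span_le.mpr ?_ this
        rintro _ ⟨s, hs, rfl⟩
        exact Submodule.subset_span (himgB s hs)
      have heq : t = (t - jA (pA t) - jB (pB t)) + jA (pA t) + jB (pB t) := by abel
      rw [heq]
      exact Submodule.add_mem _ (Submodule.add_mem _ (hdecomp t) hA') hB'
    · rw [Submodule.span_le]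
      rintro _ ⟨a, b, rfl, h0⟩
      exact h0
end

section
/- If (A, μ) is a K-algebra in which a₁a₂ = 0 implies a₁ = 0 or a₂ = 0 (e.g., A is an integral domain), then the set of pure tensors in ker μ is {0}; hence A is zero product determined if and only if μ : A ⊗ A → A is injective. -/
open TensorProduct

theorem no_zero_divisors_zpd_iff_injective {K A : Type*} [CommRing K]
    [AddCommGroup A] [Module K A]
    (μ : TensorProduct K A A →ₗ[K] A)
    (hnzd : ∀ a b : A, μ (a ⊗ₜ b) = 0 → a = 0 ∨ b = 0) :
    zeroTensors μ = {0} ∧ (IsZPD μ ↔ Function.Injective μ) := by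
  have hz : zeroTensors μ = {0} := by
    ext t
    constructor
    · rintro ⟨a, b, rfl, h⟩
      rcases hnzd a b h with rfl | rfl <;> simp
    · rintro rfl
      exact ⟨0, 0, by simp, by simp⟩
  refine ⟨hz, ?_⟩
  rw [IsZPD, hz]
  rw [Submodule.span_singleton_eq_bot.mpr rfl]
  constructor
  · intro h
    exact LinearMap.ker_eq_bot.mp h
  · intro h
    exact LinearMap.ker_eq_bot.mpr h
end
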